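/- Let J be a symmetric positive definite real 3×3 matrix, t₀ ∈ ℝ, τ, z ∈ ℝ³. Let R, R_r : ℝ → ℝ^{3×3} with R(t₀), R_r(t₀) ∈ SO(3), and ω, ω_r : ℝ → ℝ³. Suppose at t₀: R has derivative R(t₀)·ω(t₀)^×; R_r has derivative R_r(t₀)·ω_r(t₀)^×; ω has derivative J⁻¹(−ω(t₀)^× J ω(t₀) + τ); and ω_r has derivative z. Define R_e(t) := R_r(t)ᵀ R(t) and ω_e(t) := ω(t) − R_e(t)ᵀ ω_r(t). Then at t₀ (writing values at t₀ without argument): R_e has derivative R_e·ω_e^×, and ω_e has derivative J⁻¹(Σ(R_e,ω_e,ω_r)·ω_e − Υ(R_e,ω_r,z) + τ), where Υ(R_e,ω_r,z) := J R_eᵀ z + (R_eᵀω_r)^× J R_eᵀω_r and Σ(R_e,ω_e,ω_r) := (Jω_e)^× + (J R_eᵀω_r)^× − ((R_eᵀω_r)^× J + J (R_eᵀω_r)^×). -/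

import Mathlib

open Matrix

noncomputable section

abbrev M3 : Type := Matrix (Fin 3) (Fin 3) ℝ
abbrev V3 : Type := Fin 3 → ℝ

/-- skew-symmetric matrix associated to `x`: `skew x *ᵥ y = x ×₃ y`. -/
def skew (x : V3) : M3 :=
  !![0, -x 2, x 1; x 2, 0, -x 0; -x 1, x 0, 0]

/-- the special orthogonal group SO(3) as a subset of 3×3 matrices -/
def SO3 : Set M3 := {R | Rᵀ * R = 1 ∧ R.det = 1}

/-- Rodrigues formula -/
def Ra (θ : ℝ) (u : V3) : M3 :=
  1 + Real.sin θ • skew u + (1 - Real.cos θ) • (skew u * skew u)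

/-- `psi M = vec (P_a M)`, the vector part of the antisymmetric projection -/
def psi (M : M3) : V3 :=
  ![(M 2 1 - M 1 2) / 2, (M 0 2 - M 2 0) / 2, (M 1 0 - M 0 1) / 2]

/-- the angular-warping transformation `T(R,θ) = R · Ra(θ,u)` -/
def Tmap (u : V3) (R : M3) (θ : ℝ) : M3 := R * Ra θ u

/-- the potential function `U(R,θ)` on SO(3) × ℝ -/
def Ufun (A : M3) (u : V3) (γ : ℝ) (R : M3) (θ : ℝ) : ℝ :=
  (A * (1 - Tmap u R θ)).trace + γ / 2 * θ ^ 2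

/-- Euclidean norm on ℝ³ -/
def enorm3 (x : V3) : ℝ := Real.sqrt (x ⬝ᵥ x)

/-- Frobenius norm of a 3×3 matrix -/
def fnorm (M : M3) : ℝ := Real.sqrt ((Mᵀ * M).trace)

/-- `E(M) := (tr(M) I − Mᵀ)/2` -/
def Emap (M : M3) : M3 := (2⁻¹ : ℝ) • (M.trace • (1 : M3) - Mᵀ)

/-- `D_R(R,θ)` from Lemma 2 -/
def DR (A : M3) (u : V3) (R : M3) (θ : ℝ) : M3 :=
  Ra θ u * Emap (A * Tmap u R θ) * (Ra θ u)ᵀ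

/-- `D_θ(R,θ)` from Lemma 2 -/
def Dθ (A : M3) (u : V3) (R : M3) (θ : ℝ) : V3 :=
  (Ra θ u * Emap (A * Tmap u R θ)) *ᵥ u - skew (Ra θ u *ᵥ psi (A * Tmap u R θ)) *ᵥ u

/-- Δ(v,u) from the construction of the synergistic gap -/
def Delta (A : M3) (v u : V3) : ℝ :=
  u ⬝ᵥ ((A.trace • (1 : M3) - A - (2 * (v ⬝ᵥ A *ᵥ v)) • ((1 : M3) - vecMulVec v v)) *ᵥ u)

/-- `v` is a unit eigenvector of `A` -/
def IsUnitEigen (A : M3) (v : V3) : Prop :=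
  v ⬝ᵥ v = 1 ∧ ∃ lam : ℝ, A *ᵥ v = lam • v

/-- Ā := (tr(A) I − A)/2 -/
def Abar (A : M3) : M3 := (2⁻¹ : ℝ) • (A.trace • (1 : M3) - A)

/-- `lam` is an eigenvalue of `M` -/
def IsEigen (M : M3) (lam : ℝ) : Prop := ∃ w : V3, w ≠ 0 ∧ M *ᵥ w = lam • w
attribute [local instance] Matrix.normedAddCommGroup Matrix.normedSpace


lemma entry_deriv {f : ℝ → M3} {f' : M3} {t : ℝ} (hf : HasDerivAt f f' t) (i j : Fin 3) :
    HasDerivAt (fun s => f s i j) (f' i j) t :=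
  hasDerivAt_pi.mp (hasDerivAt_pi.mp hf i) j

lemma hasDerivAt_matmul {f g : ℝ → M3} {f' g' : M3} {t : ℝ}
    (hf : HasDerivAt f f' t) (hg : HasDerivAt g g' t) :
    HasDerivAt (fun s => f s * g s) (f' * g t + f t * g') t := by
  apply hasDerivAt_pi.mpr; intro i; apply hasDerivAt_pi.mpr; intro j
  simp only [Matrix.mul_apply, Matrix.add_apply]
  have h := HasDerivAt.fun_sum (u := Finset.univ)
    (fun k _ => ((entry_deriv hf i k).fun_mul (entry_deriv hg k j)))
  convert h using 1
  rw [← Finset.sum_add_distrib]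

lemma hasDerivAt_transposeM {f : ℝ → M3} {f' : M3} {t : ℝ} (hf : HasDerivAt f f' t) :
    HasDerivAt (fun s => (f s)ᵀ) f'ᵀ t := by
  apply hasDerivAt_pi.mpr; intro i; apply hasDerivAt_pi.mpr; intro j
  simpa using entry_deriv hf j i

lemma hasDerivAt_matvec {f : ℝ → M3} {v : ℝ → V3} {f' : M3} {v' : V3} {t : ℝ}
    (hf : HasDerivAt f f' t) (hv : HasDerivAt v v' t) :
    HasDerivAt (fun s => f s *ᵥ v s) (f' *ᵥ v t + f t *ᵥ v') t := by
  apply hasDerivAt_pi.mpr; intro i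
  simp only [Matrix.mulVec, dotProduct, Pi.add_apply]
  have h := HasDerivAt.fun_sum (u := Finset.univ)
    (fun k _ => ((entry_deriv hf i k).fun_mul (hasDerivAt_pi.mp hv k)))
  convert h using 1
  rw [← Finset.sum_add_distrib]

lemma skew_transpose (x : V3) : (skew x)ᵀ = -skew x := by
  ext i j; fin_cases i <;> fin_cases j <;> simp [skew]

lemma skew_sub (x y : V3) : skew (x - y) = skew x - skew y := by
  ext i j; fin_cases i <;> fin_cases j <;> simp [skew] <;> ring

lemma key1 (M : M3) (v : V3) : Mᵀ * skew (M *ᵥ v) * M = M.det • skew v := by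
  ext i j
  fin_cases i <;> fin_cases j <;>
    simp [skew, Matrix.mul_apply, Matrix.mulVec, dotProduct, Fin.sum_univ_three,
      Matrix.det_fin_three, Matrix.smul_apply] <;> ring

lemma key2 (Jm : M3) (a b c : V3) :
    -(skew (a+b) *ᵥ (Jm *ᵥ (a+b))) + (Jm *ᵥ (skew a *ᵥ b) - Jm *ᵥ c)
      = (skew (Jm *ᵥ a) + skew (Jm *ᵥ b) - (skew b * Jm + Jm * skew b)) *ᵥ a
        - (Jm *ᵥ c + skew b *ᵥ (Jm *ᵥ b)) := by
  funext i
  fin_cases i <;>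
    simp [skew, Matrix.mulVec, dotProduct, Fin.sum_univ_three, Matrix.mul_apply,
      Matrix.add_apply, Matrix.sub_apply, Matrix.neg_apply, Matrix.vecMul, Matrix.vecHead, Matrix.vecTail] <;> ring

lemma mul_self_transpose_of_SO3 {Q : M3} (hQ : Q ∈ SO3) : Q * Qᵀ = 1 :=
  mul_eq_one_comm.mp hQ.1

lemma transpose_mem_SO3 {Q : M3} (hQ : Q ∈ SO3) : Qᵀ ∈ SO3 := by
  refine ⟨?_, by rw [Matrix.det_transpose]; exact hQ.2⟩
  rw [Matrix.transpose_transpose]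
  exact mul_self_transpose_of_SO3 hQ

lemma mul_mem_SO3 {P Q : M3} (hP : P ∈ SO3) (hQ : Q ∈ SO3) : P * Q ∈ SO3 := by
  refine ⟨?_, by rw [Matrix.det_mul, hP.2, hQ.2, one_mul]⟩
  rw [Matrix.transpose_mul, Matrix.mul_assoc, ← Matrix.mul_assoc Pᵀ, hP.1, Matrix.one_mul, hQ.1]

/-- for `Q ∈ SO3`: `Q * skew (Qᵀ *ᵥ v) = skew v * Q` -/
lemma skew_conj {Q : M3} (hQ : Q ∈ SO3) (v : V3) :
    Q * skew (Qᵀ *ᵥ v) = skew v * Q := by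
  have h := key1 Qᵀ v
  rw [Matrix.transpose_transpose, Matrix.det_transpose, hQ.2, one_smul] at h
  calc Q * skew (Qᵀ *ᵥ v) = Q * skew (Qᵀ *ᵥ v) * (Qᵀ * Q) := by rw [hQ.1, Matrix.mul_one]
    _ = (Q * skew (Qᵀ *ᵥ v) * Qᵀ) * Q := by simp only [Matrix.mul_assoc]
    _ = skew v * Q := by rw [Matrix.mul_assoc Q] at h ⊢; rw [h]

theorem tracking_error_dynamics
    (J : M3) (hJ : J.PosDef) (t₀ : ℝ) (τ z : V3)
    (R Rr : ℝ → M3) (hR0 : R t₀ ∈ SO3) (hRr0 : Rr t₀ ∈ SO3)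
    (ω ωr : ℝ → V3)
    (hR : HasDerivAt R (R t₀ * skew (ω t₀)) t₀)
    (hRr : HasDerivAt Rr (Rr t₀ * skew (ωr t₀)) t₀)
    (hω : HasDerivAt ω (J⁻¹ *ᵥ (-(skew (ω t₀) *ᵥ (J *ᵥ ω t₀)) + τ)) t₀)
    (hωr : HasDerivAt ωr z t₀)
    (Re : ℝ → M3) (hRe : ∀ t, Re t = (Rr t)ᵀ * R t)
    (ωe : ℝ → V3) (hωe : ∀ t, ωe t = ω t - (Re t)ᵀ *ᵥ ωr t)
    (Υv : V3)
    (hΥ : Υv = J *ᵥ ((Re t₀)ᵀ *ᵥ z) +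
      skew ((Re t₀)ᵀ *ᵥ ωr t₀) *ᵥ (J *ᵥ ((Re t₀)ᵀ *ᵥ ωr t₀)))
    (Sm : M3)
    (hSm : Sm = skew (J *ᵥ ωe t₀) + skew (J *ᵥ ((Re t₀)ᵀ *ᵥ ωr t₀)) -
      (skew ((Re t₀)ᵀ *ᵥ ωr t₀) * J + J * skew ((Re t₀)ᵀ *ᵥ ωr t₀))) :
    HasDerivAt Re (Re t₀ * skew (ωe t₀)) t₀ ∧
    HasDerivAt ωe (J⁻¹ *ᵥ (Sm *ᵥ ωe t₀ - Υv + τ)) t₀ := by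
  have hQmem : Re t₀ ∈ SO3 := by
    rw [hRe]; exact mul_mem_SO3 (transpose_mem_SO3 hRr0) hR0
  set Q : M3 := Re t₀ with hQdef
  set a : V3 := ωe t₀ with hadef
  set b : V3 := Qᵀ *ᵥ ωr t₀ with hbdef
  set c : V3 := Qᵀ *ᵥ z with hcdef
  -- part 1
  have hReEq : Re = fun t => (Rr t)ᵀ * R t := funext hRe
  have hd1 : HasDerivAt Re ((Rr t₀ * skew (ωr t₀))ᵀ * R t₀ + (Rr t₀)ᵀ * (R t₀ * skew (ω t₀))) t₀ := by
    rw [hReEq]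
    exact hasDerivAt_matmul (hasDerivAt_transposeM hRr) hR
  have heq1 : (Rr t₀ * skew (ωr t₀))ᵀ * R t₀ + (Rr t₀)ᵀ * (R t₀ * skew (ω t₀))
      = Q * skew a := by
    have ha' : a = ω t₀ - b := hωe t₀
    rw [ha', skew_sub, Matrix.mul_sub, hbdef, skew_conj hQmem]
    rw [hQdef, hRe t₀]
    rw [Matrix.transpose_mul, skew_transpose]
    simp only [Matrix.neg_mul, Matrix.mul_assoc]
    abel
  rw [heq1] at hd1
  refine ⟨hd1, ?_⟩
  -- part 2
  have hωeEq : ωe = fun t => ω t - (Re t)ᵀ *ᵥ ωr t := funext hωe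
  have hd2 : HasDerivAt ωe (J⁻¹ *ᵥ (-(skew (ω t₀) *ᵥ (J *ᵥ ω t₀)) + τ) -
      ((Q * skew a)ᵀ *ᵥ ωr t₀ + Qᵀ *ᵥ z)) t₀ := by
    rw [hωeEq]
    exact hω.sub (hasDerivAt_matvec (hasDerivAt_transposeM hd1) hωr)
  have hJinv : J⁻¹ * J = 1 :=
    Matrix.nonsing_inv_mul J (isUnit_iff_ne_zero.mpr hJ.det_pos.ne')
  have hJJ : ∀ y : V3, J⁻¹ *ᵥ (J *ᵥ y) = y := by
    intro y; rw [Matrix.mulVec_mulVec, hJinv, Matrix.one_mulVec]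
  have hω0 : ω t₀ = a + b := by
    have := hωe t₀; rw [← hbdef, ← hadef] at this
    rw [eq_comm, sub_eq_iff_eq_add] at this
    rw [this]
  have heq2 : J⁻¹ *ᵥ (-(skew (ω t₀) *ᵥ (J *ᵥ ω t₀)) + τ) -
      ((Q * skew a)ᵀ *ᵥ ωr t₀ + Qᵀ *ᵥ z) = J⁻¹ *ᵥ (Sm *ᵥ a - Υv + τ) := by
    have h3 : (Q * skew a)ᵀ *ᵥ ωr t₀ = -(skew a *ᵥ b) := by
      rw [Matrix.transpose_mul, skew_transpose, Matrix.neg_mul, Matrix.neg_mulVec,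
        ← Matrix.mulVec_mulVec]
    rw [h3, hω0]
    have h4 : J⁻¹ *ᵥ (-(skew (a + b) *ᵥ (J *ᵥ (a + b))) + τ) - (-(skew a *ᵥ b) + c)
        = J⁻¹ *ᵥ ((-(skew (a + b) *ᵥ (J *ᵥ (a + b))) + (J *ᵥ (skew a *ᵥ b) - J *ᵥ c)) + τ) := by
      simp only [Matrix.mulVec_add, Matrix.mulVec_sub, hJJ]
      abel
    rw [h4, key2 J a b c, hSm, hΥ]
  rwa [heq2] at hd2
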